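/- Let W₁,…,Wₙ be square d×d matrices with Wⱼ₊₁ᵀWⱼ₊₁ = WⱼWⱼᵀ for all j = 1,…,n−1, and let W := Wₙ⋯W₁. Then for each j = 1,…,n: (Wₙ⋯Wⱼ₊₁)(Wₙ⋯Wⱼ₊₁)ᵀ = (WWᵀ)^{(n−j)/n} and (Wⱼ₋₁⋯W₁)ᵀ(Wⱼ₋₁⋯W₁) = (WᵀW)^{(j−1)/n}, where A^{β} for positive semidefinite A denotes the matrix power defined via the spectral decomposition (with A⁰ = I). -/

import Mathlib

open Matrix

/-- Product `W (m-1) * ⋯ * W j` of a chain of matrices with dimensions given by `d`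
(the identity when `m = j`, junk when `m < j`). -/
noncomputable def chain (d : ℕ → ℕ) (W : ∀ k : ℕ, Matrix (Fin (d (k + 1))) (Fin (d k)) ℝ)
    (j : ℕ) : (m : ℕ) → Matrix (Fin (d m)) (Fin (d j)) ℝ
  | 0 => if h : j = 0 then by subst h; exact 1 else 0
  | m + 1 => if h : j = m + 1 then by subst h; exact 1 else W m * chain d W j m

/-- The spectral real power `A ^ β` of a (positive semidefinite) symmetric real matrix, defined
via the spectral decomposition (with `0 ^ 0 = 1`, so `A ^ 0 = I`); junk value `0` if `A` is not
symmetric. -/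
noncomputable def psdPow {m : ℕ} (A : Matrix (Fin m) (Fin m) ℝ) (β : ℝ) :
    Matrix (Fin m) (Fin m) ℝ :=
  if hA : A.IsHermitian then hA.cfc (fun x => x ^ β) else 0

lemma chain_self (d : ℕ → ℕ) (W : ∀ k : ℕ, Matrix (Fin (d (k + 1))) (Fin (d k)) ℝ) (j : ℕ) :
    chain d W j j = 1 := by
  cases j with
  | zero => simp [chain]
  | succ m => simp [chain]

lemma chain_succ (d : ℕ → ℕ) (W : ∀ k : ℕ, Matrix (Fin (d (k + 1))) (Fin (d k)) ℝ) (j m : ℕ)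
    (h : j ≠ m + 1) : chain d W j (m + 1) = W m * chain d W j m := by
  rw [chain, dif_neg h]

lemma continuousOn_of_finite {f : ℝ → ℝ} {s : Set ℝ} (hs : s.Finite) : ContinuousOn f s := by
  rw [continuousOn_iff_continuous_restrict]
  haveI := hs.to_subtype
  exact continuous_of_discreteTopology

lemma psdPow_pow {m : ℕ} {A : Matrix (Fin m) (Fin m) ℝ} (hA : A.PosSemidef)
    {n : ℕ} (hn : n ≠ 0) (p : ℕ) : psdPow (A ^ n) ((p : ℝ) / (n : ℝ)) = A ^ p := by
  have hHn : (A ^ n).IsHermitian := (hA.pow n).isHermitian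
  have hH : IsSelfAdjoint A := hA.isHermitian
  rw [psdPow, dif_pos hHn, ← Matrix.IsHermitian.cfc_eq hHn,
    ← cfc_comp_pow (fun x : ℝ => x ^ ((p : ℝ) / (n : ℝ))) n A
      (continuousOn_of_finite (Matrix.finite_real_spectrum.image _)) hH,
    ← cfc_pow_id (R := ℝ) A p hH]
  apply cfc_congr
  intro x hx
  have hx0 : 0 ≤ x := by
    rw [Matrix.IsHermitian.spectrum_real_eq_range_eigenvalues hA.isHermitian] at hx
    obtain ⟨i, rfl⟩ := hx
    exact hA.eigenvalues_nonneg i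
  have hmul : (n : ℝ) * ((p : ℝ) / (n : ℝ)) = (p : ℝ) := by
    field_simp
  simp only
  rw [← Real.rpow_natCast x n, ← Real.rpow_mul hx0, hmul, Real.rpow_natCast]

section Algebra

variable {d n : ℕ} (W : ℕ → Matrix (Fin d) (Fin d) ℝ)

lemma head_sq (hbal : ∀ j : ℕ, j + 1 < n → (W (j + 1))ᵀ * W (j + 1) = W j * (W j)ᵀ) :
    ∀ m, ∀ j, j < m → m ≤ n →
      chain (fun _ => d) W j m * (chain (fun _ => d) W j m)ᵀ
        = (W (m - 1) * (W (m - 1))ᵀ) ^ (m - j) := by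
  intro m
  induction m with
  | zero => omega
  | succ m ih =>
    intro j hj hm
    rw [chain_succ _ _ _ _ (by omega)]
    rcases eq_or_lt_of_le (Nat.lt_succ_iff.mp hj) with rfl | hjm
    · simp [chain_self, pow_one, Nat.sub_self]
    · have hC := ih j hjm (by omega)
      have hb := hbal (m - 1) (by omega)
      rw [show m - 1 + 1 = m from by omega] at hb
      have hsc : SemiconjBy (W m) ((W m)ᵀ * W m) (W m * (W m)ᵀ) :=
        (mul_assoc (W m) (W m)ᵀ (W m)).symm
      have hscp := hsc.pow_right (m - j)
      calc W m * chain (fun _ => d) W j m * (W m * chain (fun _ => d) W j m)ᵀ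
          = W m * (chain (fun _ => d) W j m * (chain (fun _ => d) W j m)ᵀ) * (W m)ᵀ := by
            rw [transpose_mul]; simp only [mul_assoc]
        _ = W m * ((W m)ᵀ * W m) ^ (m - j) * (W m)ᵀ := by rw [hC, ← hb]
        _ = (W m * (W m)ᵀ) ^ (m - j) * W m * (W m)ᵀ := by rw [hscp]
        _ = (W m * (W m)ᵀ) ^ (m + 1 - j) := by
            rw [mul_assoc, ← pow_succ, show m + 1 - j = m - j + 1 from by omega]
        _ = (W (m + 1 - 1) * (W (m + 1 - 1))ᵀ) ^ (m + 1 - j) := by norm_num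

lemma tail_semiconj (hbal : ∀ j : ℕ, j + 1 < n → (W (j + 1))ᵀ * W (j + 1) = W j * (W j)ᵀ) :
    ∀ t, t + 1 ≤ n →
      chain (fun _ => d) W 0 (t + 1) * ((W 0)ᵀ * W 0)
        = (W t * (W t)ᵀ) * chain (fun _ => d) W 0 (t + 1) := by
  intro t
  induction t with
  | zero =>
    intro _
    rw [chain_succ _ _ _ _ (by omega), chain_self, mul_one, ← mul_assoc]
  | succ t ih =>
    intro h
    have hb := hbal t (by omega)
    rw [chain_succ _ _ _ _ (by omega), mul_assoc, ih (by omega), ← mul_assoc, ← hb]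
    simp only [mul_assoc]

lemma tail_sq (hbal : ∀ j : ℕ, j + 1 < n → (W (j + 1))ᵀ * W (j + 1) = W j * (W j)ᵀ) :
    ∀ k, k ≤ n →
      (chain (fun _ => d) W 0 k)ᵀ * chain (fun _ => d) W 0 k = ((W 0)ᵀ * W 0) ^ k := by
  intro k
  induction k with
  | zero => simp [chain_self]
  | succ k ih =>
    intro hk
    rw [chain_succ _ _ _ _ (by omega), transpose_mul]
    cases k with
    | zero => simp [chain_self]
    | succ t =>
      have hb := hbal t (by omega)
      have hts := tail_semiconj W hbal t (by omega)
      have hts' : ((W 0)ᵀ * W 0) * (chain (fun _ => d) W 0 (t + 1))ᵀ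
          = (chain (fun _ => d) W 0 (t + 1))ᵀ * (W t * (W t)ᵀ) := by
        have := congrArg Matrix.transpose hts
        simpa [transpose_mul] using this
      calc (chain (fun _ => d) W 0 (t + 1))ᵀ * (W (t + 1))ᵀ
            * (W (t + 1) * chain (fun _ => d) W 0 (t + 1))
          = (chain (fun _ => d) W 0 (t + 1))ᵀ * ((W (t + 1))ᵀ * W (t + 1))
              * chain (fun _ => d) W 0 (t + 1) := by simp only [mul_assoc]
        _ = (chain (fun _ => d) W 0 (t + 1))ᵀ * (W t * (W t)ᵀ)
              * chain (fun _ => d) W 0 (t + 1) := by rw [hb]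
        _ = ((W 0)ᵀ * W 0) * ((chain (fun _ => d) W 0 (t + 1))ᵀ
              * chain (fun _ => d) W 0 (t + 1)) := by rw [← hts']; simp only [mul_assoc]
        _ = ((W 0)ᵀ * W 0) ^ (t + 1 + 1) := by rw [ih (by omega), ← pow_succ']

end Algebra


/-- For balanced square matrices `W₁,…,Wₙ` (0-indexed: layer `j ∈ {1,…,n}` of the paper is
`k = j - 1` here) with end-to-end matrix `P = Wₙ⋯W₁`:
`(Wₙ⋯Wⱼ₊₁)(Wₙ⋯Wⱼ₊₁)ᵀ = (P Pᵀ)^{(n−j)/n}` and `(Wⱼ₋₁⋯W₁)ᵀ(Wⱼ₋₁⋯W₁) = (Pᵀ P)^{(j−1)/n}`. -/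
theorem balanced_partial_products_are_powers {d n : ℕ}
    (W : ℕ → Matrix (Fin d) (Fin d) ℝ)
    (hbal : ∀ j : ℕ, j + 1 < n → (W (j + 1))ᵀ * W (j + 1) = W j * (W j)ᵀ) :
    ∀ k < n,
      chain (fun _ => d) W (k + 1) n * (chain (fun _ => d) W (k + 1) n)ᵀ
        = psdPow (chain (fun _ => d) W 0 n * (chain (fun _ => d) W 0 n)ᵀ)
            (((n : ℝ) - (k + 1)) / n) ∧
      (chain (fun _ => d) W 0 k)ᵀ * chain (fun _ => d) W 0 k
        = psdPow ((chain (fun _ => d) W 0 n)ᵀ * chain (fun _ => d) W 0 n) ((k : ℝ) / n) := by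
  intro k hk
  have hn : n ≠ 0 := by omega
  constructor
  · -- head part
    have hB : (W (n - 1) * (W (n - 1))ᵀ).PosSemidef := by
      have := Matrix.posSemidef_self_mul_conjTranspose (W (n - 1))
      rwa [Matrix.conjTranspose_eq_transpose_of_trivial] at this
    have hP : chain (fun _ => d) W 0 n * (chain (fun _ => d) W 0 n)ᵀ
        = (W (n - 1) * (W (n - 1))ᵀ) ^ n := by
      simpa using head_sq W hbal n 0 (by omega) le_rfl
    have h1 : chain (fun _ => d) W (k + 1) n * (chain (fun _ => d) W (k + 1) n)ᵀ
        = (W (n - 1) * (W (n - 1))ᵀ) ^ (n - (k + 1)) := by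
      rcases eq_or_lt_of_le (show k + 1 ≤ n from hk) with rfl | hlt
      · simp [chain_self, Nat.sub_self]
      · exact head_sq W hbal n (k + 1) hlt le_rfl
    have hcast : ((n : ℝ) - ((k : ℝ) + 1)) / (n : ℝ) = ((n - (k + 1) : ℕ) : ℝ) / (n : ℝ) := by
      rw [Nat.cast_sub (by omega)]
      push_cast
      ring_nf
    rw [h1, hP, hcast, psdPow_pow hB hn (n - (k + 1))]
  · -- tail part
    have hA : ((W 0)ᵀ * W 0).PosSemidef := by
      have := Matrix.posSemidef_conjTranspose_mul_self (W 0)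
      rwa [Matrix.conjTranspose_eq_transpose_of_trivial] at this
    have hP : (chain (fun _ => d) W 0 n)ᵀ * chain (fun _ => d) W 0 n = ((W 0)ᵀ * W 0) ^ n :=
      tail_sq W hbal n le_rfl
    rw [tail_sq W hbal k (by omega), hP, psdPow_pow hA hn k]
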